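/- Let A, B be symmetric positive definite d×d matrices and define the S-divergence δ_S²(A,B) := log det((A+B)/2) − (1/2) log det(AB). Then δ_S²(A,B) = Σ_{i=1}^d [ log(1 + λ_i) − (1/2) log λ_i ] − d·log 2, where λ₁,…,λ_d are the eigenvalues of A^{-1}B. In particular, δ_S²(A,B) ≥ 0 with equality iff A = B. -/

import Mathlib

open Matrix

/-- The S-divergence `δ_S²(A,B) = log det((A+B)/2) − (1/2) log det(AB)`. -/
noncomputable def Sdiv {d : ℕ} (A B : Matrix (Fin d) (Fin d) ℝ) : ℝ :=
  Real.log (((2 : ℝ)⁻¹ • (A + B)).det) - (1 / 2) * Real.log ((A * B).det)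

open scoped MatrixOrder

private lemma eval_charpoly' {d : ℕ} (M : Matrix (Fin d) (Fin d) ℝ) (x : ℝ) :
    M.charpoly.eval x = (x • (1 : Matrix (Fin d) (Fin d) ℝ) - M).det := by
  rw [Matrix.charpoly, ← Polynomial.coe_evalRingHom, RingHom.map_det]
  congr 1
  ext i j
  by_cases h : i = j <;>
    simp [h, charmatrix_apply_eq, charmatrix_apply_ne, Matrix.one_apply, Ne.symm]

private lemma log_two_le_f {x : ℝ} (hx : 0 < x) :
    Real.log 2 ≤ Real.log (1 + x) - (1 / 2) * Real.log x := by
  have hs := Real.sq_sqrt hx.le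
  have hs0 := Real.sqrt_nonneg x
  have h2 : 2 * Real.sqrt x ≤ 1 + x := by nlinarith [sq_nonneg (Real.sqrt x - 1)]
  have hlog : Real.log (2 * Real.sqrt x) ≤ Real.log (1 + x) :=
    Real.log_le_log (by positivity) h2
  rw [Real.log_mul two_ne_zero (by positivity), Real.log_sqrt hx.le] at hlog
  linarith

private lemma eq_one_of_f_eq {x : ℝ} (hx : 0 < x)
    (h : Real.log (1 + x) - (1 / 2) * Real.log x = Real.log 2) : x = 1 := by
  have hs := Real.sq_sqrt hx.le
  have hs0 := Real.sqrt_nonneg x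
  have h1 : Real.log (1 + x) = Real.log (2 * Real.sqrt x) := by
    rw [Real.log_mul two_ne_zero (by positivity), Real.log_sqrt hx.le]
    linarith
  have h2 : (1 : ℝ) + x = 2 * Real.sqrt x := by
    have e1 : Real.exp (Real.log (1 + x)) = 1 + x := Real.exp_log (by linarith)
    have e2 : Real.exp (Real.log (2 * Real.sqrt x)) = 2 * Real.sqrt x :=
      Real.exp_log (by positivity)
    rw [← e1, h1, e2]
  nlinarith [sq_nonneg (Real.sqrt x - 1)]

private lemma sdiv_formula {d : ℕ} {A B : Matrix (Fin d) (Fin d) ℝ}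
    (hA : A.PosDef) (lam : Fin d → ℝ) (hpos : ∀ i, 0 < lam i)
    (hdB : B.det = A.det * ∏ i, lam i)
    (hdAB : (A + B).det = A.det * ∏ i, (1 + lam i)) :
    Sdiv A B = (∑ i, (Real.log (1 + lam i) - (1 / 2) * Real.log (lam i)))
        - d * Real.log 2 := by
  have hdA := hA.det_pos
  have e1 : ((2 : ℝ)⁻¹ • (A + B)).det = (2 : ℝ)⁻¹ ^ d * (A.det * ∏ i, (1 + lam i)) := by
    rw [Matrix.det_smul, hdAB, Fintype.card_fin]
  have e2 : (A * B).det = A.det * (A.det * ∏ i, lam i) := by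
    rw [Matrix.det_mul, hdB]
  have hprod1 : (0:ℝ) < ∏ i, (1 + lam i) :=
    Finset.prod_pos fun i _ => by have := hpos i; linarith
  have hprod2 : (0:ℝ) < ∏ i, lam i := Finset.prod_pos fun i _ => hpos i
  have l1 : Real.log ((2 : ℝ)⁻¹ ^ d * (A.det * ∏ i, (1 + lam i)))
      = -(d * Real.log 2) + (Real.log A.det + ∑ i, Real.log (1 + lam i)) := by
    rw [Real.log_mul (by positivity) (by positivity),
      Real.log_mul hdA.ne' hprod1.ne', Real.log_pow, Real.log_inv,
      Real.log_prod (fun i _ => by have := hpos i; positivity)]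
    ring
  have l2 : Real.log (A.det * (A.det * ∏ i, lam i))
      = Real.log A.det + (Real.log A.det + ∑ i, Real.log (lam i)) := by
    rw [Real.log_mul hdA.ne' (by positivity),
      Real.log_mul hdA.ne' hprod2.ne',
      Real.log_prod (fun i _ => (hpos i).ne')]
  rw [Sdiv, e1, e2, l1, l2, Finset.sum_sub_distrib, ← Finset.mul_sum]
  ring

theorem Sdiv_eigenvalue_formula {d : ℕ} {A B : Matrix (Fin d) (Fin d) ℝ}
    (hA : A.PosDef) (hB : B.PosDef) (μ : Fin d → ℝ)
    (hμ : (A⁻¹ * B).charpoly = ∏ i, (Polynomial.X - Polynomial.C (μ i))) :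
    Sdiv A B = (∑ i, (Real.log (1 + μ i) - (1 / 2) * Real.log (μ i)))
        - d * Real.log 2 ∧
      0 ≤ Sdiv A B ∧ (Sdiv A B = 0 ↔ A = B) := by
  have hdA := hA.det_pos
  have hdB := hB.det_pos
  have hAu : IsUnit A.det := isUnit_iff_ne_zero.mpr hdA.ne'
  have key : ∀ x : ℝ, (x • (1 : Matrix (Fin d) (Fin d) ℝ) - A⁻¹ * B).det
      = ∏ i, (x - μ i) := by
    intro x
    rw [← eval_charpoly', hμ]
    simp [Polynomial.eval_prod]
  -- positivity of the μ i
  have hμpos : ∀ i, 0 < μ i := by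
    intro i
    have h0 : ((μ i) • (1 : Matrix (Fin d) (Fin d) ℝ) - A⁻¹ * B).det = 0 := by
      rw [key]
      exact Finset.prod_eq_zero (Finset.mem_univ i) (sub_self _)
    have hconv : A * ((μ i) • (1 : Matrix (Fin d) (Fin d) ℝ) - A⁻¹ * B)
        = μ i • A - B := by
      rw [Matrix.mul_sub, Matrix.mul_smul, Matrix.mul_one, ← Matrix.mul_assoc,
        Matrix.mul_nonsing_inv A hAu, Matrix.one_mul]
    have h1 : (μ i • A - B).det = 0 := by
      rw [← hconv, Matrix.det_mul, h0, mul_zero]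
    obtain ⟨v, hv0, hv⟩ := (Matrix.exists_mulVec_eq_zero_iff).mpr h1
    rw [Matrix.sub_mulVec, sub_eq_zero, Matrix.smul_mulVec] at hv
    have ha := hA.dotProduct_mulVec_pos hv0
    have hb := hB.dotProduct_mulVec_pos hv0
    have hd : dotProduct (star v) (B *ᵥ v) = μ i * dotProduct (star v) (A *ᵥ v) := by
      rw [← hv, dotProduct_smul, smul_eq_mul]
    nlinarith
  -- determinant identities from the characteristic polynomial
  have hdetM : (A⁻¹ * B).det = ∏ i, μ i := by
    have h0 := key 0
    rw [zero_smul, zero_sub, Matrix.det_neg, Fintype.card_fin] at h0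
    have h1 : ∏ i, ((0 : ℝ) - μ i) = (-1 : ℝ) ^ d * ∏ i, μ i := by
      have he : ∀ i : Fin d, (0 : ℝ) - μ i = (-1) * μ i := fun i => by ring
      simp_rw [he]
      rw [Finset.prod_mul_distrib, Finset.prod_const, Finset.card_univ, Fintype.card_fin]
    rw [h1] at h0
    exact mul_left_cancel₀ (by simp : ((-1 : ℝ) ^ d) ≠ 0) h0
  have hdet1M : (1 + A⁻¹ * B).det = ∏ i, (1 + μ i) := by
    have h0 := key (-1)
    have e : (-1 : ℝ) • (1 : Matrix (Fin d) (Fin d) ℝ) - A⁻¹ * B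
        = -(1 + A⁻¹ * B) := by
      rw [neg_one_smul]; abel
    rw [e, Matrix.det_neg, Fintype.card_fin] at h0
    have h1 : ∏ i, ((-1 : ℝ) - μ i) = (-1 : ℝ) ^ d * ∏ i, (1 + μ i) := by
      have he : ∀ i : Fin d, (-1 : ℝ) - μ i = (-1) * (1 + μ i) := fun i => by ring
      simp_rw [he]
      rw [Finset.prod_mul_distrib, Finset.prod_const, Finset.card_univ, Fintype.card_fin]
    rw [h1] at h0
    exact mul_left_cancel₀ (by simp : ((-1 : ℝ) ^ d) ≠ 0) h0
  have hBdetμ : B.det = A.det * ∏ i, μ i := by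
    have h2 : (A⁻¹ * B).det = A.det⁻¹ * B.det := by
      rw [Matrix.det_mul, Matrix.det_nonsing_inv, Ring.inverse_eq_inv']
    rw [h2] at hdetM
    field_simp at hdetM
    linarith [hdetM]
  have hABdetμ : (A + B).det = A.det * ∏ i, (1 + μ i) := by
    have hconv : A * (1 + A⁻¹ * B) = A + B := by
      rw [Matrix.mul_add, Matrix.mul_one, ← Matrix.mul_assoc,
        Matrix.mul_nonsing_inv A hAu, Matrix.one_mul]
    rw [← hconv, Matrix.det_mul, hdet1M]
  have formula := sdiv_formula hA μ hμpos hBdetμ hABdetμ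
  refine ⟨formula, ?_⟩
  -- now the square root and the Hermitian conjugate
  set S := CFC.sqrt A with hSdef
  have hSS : S * S = A := CFC.sqrt_mul_sqrt_self A hA.posSemidef.nonneg
  have hSh : S.IsHermitian := (CFC.sqrt_nonneg A).posSemidef.1
  have hSdet : S.det ≠ 0 := by
    intro h
    have : A.det = 0 := by rw [← hSS, Matrix.det_mul, h, mul_zero]
    exact hdA.ne' this
  have hSu : IsUnit S.det := isUnit_iff_ne_zero.mpr hSdet
  have hSiS : S⁻¹ * S = 1 := Matrix.nonsing_inv_mul S hSu
  have hSSi : S * S⁻¹ = 1 := Matrix.mul_nonsing_inv S hSu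
  have hS2 : S.det * S.det = A.det := by rw [← Matrix.det_mul, hSS]
  set C := S⁻¹ * B * S⁻¹ with hCdef
  have hSih : (S⁻¹).IsHermitian := hSh.inv
  have hCpd : C.PosDef := by
    refine Matrix.PosDef.of_dotProduct_mulVec_pos ?_ ?_
    · have h1 : Cᴴ = (S⁻¹)ᴴ * Bᴴ * (S⁻¹)ᴴ := by
        rw [hCdef, Matrix.conjTranspose_mul, Matrix.conjTranspose_mul, Matrix.mul_assoc]
      rw [Matrix.IsHermitian, h1, hSih.eq, hB.1.eq]
    · intro x hx
      have hy : S⁻¹ *ᵥ x ≠ 0 := by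
        intro h
        apply hx
        have h2 := congrArg (fun w => S *ᵥ w) h
        simpa [Matrix.mulVec_mulVec, hSSi] using h2
      have hpos := hB.dotProduct_mulVec_pos hy
      have hrw : dotProduct (star x) (C *ᵥ x)
          = dotProduct (star (S⁻¹ *ᵥ x)) (B *ᵥ (S⁻¹ *ᵥ x)) := by
        rw [hCdef, ← Matrix.mulVec_mulVec, ← Matrix.mulVec_mulVec,
          star_mulVec, ← Matrix.dotProduct_mulVec, hSih.eq]
      rw [hrw]
      exact hpos
  set ν := hCpd.1.eigenvalues with hνdef
  have hνpos : ∀ i, 0 < ν i := hCpd.eigenvalues_pos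
  set U : Matrix (Fin d) (Fin d) ℝ := (hCpd.1.eigenvectorUnitary : Matrix (Fin d) (Fin d) ℝ) with hU
  have hUU : U * star U = 1 :=
    (Matrix.mem_unitaryGroup_iff).mp hCpd.1.eigenvectorUnitary.2
  have hsp : C = U * diagonal (RCLike.ofReal ∘ ν) * star U := by
    have h := hCpd.1.spectral_theorem
    rwa [Unitary.conjStarAlgAut_apply] at h
  have hdetC : C.det = ∏ i, ν i := by
    have h := hCpd.1.det_eq_prod_eigenvalues
    simpa using h
  have hdetCval : A.det * C.det = B.det := by
    rw [hCdef, Matrix.det_mul, Matrix.det_mul, Matrix.det_nonsing_inv, Ring.inverse_eq_inv']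
    field_simp
    nlinarith [hS2]
  have hBdetν : B.det = A.det * ∏ i, ν i := by rw [← hdetCval, hdetC]
  have hSAS : S⁻¹ * A * S⁻¹ = 1 := by
    rw [← hSS, ← Matrix.mul_assoc, hSiS, Matrix.one_mul, hSSi]
  have hone : S⁻¹ * (A + B) * S⁻¹ = 1 + C := by
    rw [Matrix.mul_add, Matrix.add_mul, hSAS]
  have hdet1C : (1 + C).det = ∏ i, (1 + ν i) := by
    have h1C : (1 : Matrix (Fin d) (Fin d) ℝ) + C
        = U * (1 + diagonal (RCLike.ofReal ∘ ν)) * star U := by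
      rw [Matrix.mul_add, Matrix.add_mul, Matrix.mul_one, hUU, ← hsp]
    have hud : U.det * (star U).det = 1 := by
      rw [← Matrix.det_mul, hUU, Matrix.det_one]
    have hdd : ((1 : Matrix (Fin d) (Fin d) ℝ) + diagonal (RCLike.ofReal ∘ ν)).det
        = ∏ i, (1 + ν i) := by
      rw [← Matrix.diagonal_one, Matrix.diagonal_add, Matrix.det_diagonal]
      simp
    rw [h1C, Matrix.det_mul, Matrix.det_mul, hdd, mul_comm U.det, mul_assoc, hud,
      mul_one]
  have hABdetν : (A + B).det = A.det * ∏ i, (1 + ν i) := by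
    have h3 : (1 + C).det * A.det = (A + B).det := by
      rw [← hone, Matrix.det_mul, Matrix.det_mul, Matrix.det_nonsing_inv,
        Ring.inverse_eq_inv', ← hS2]
      field_simp
    rw [← h3, hdet1C]; ring
  have formulaν := sdiv_formula hA ν hνpos hBdetν hABdetν
  have hsplit : ∑ i : Fin d, ((Real.log (1 + ν i) - (1 / 2) * Real.log (ν i)) - Real.log 2)
      = (∑ i, (Real.log (1 + ν i) - (1 / 2) * Real.log (ν i))) - d * Real.log 2 := by
    rw [Finset.sum_sub_distrib, Finset.sum_const, Finset.card_univ,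
      Fintype.card_fin, nsmul_eq_mul]
  have hsum : Sdiv A B
      = ∑ i, ((Real.log (1 + ν i) - (1 / 2) * Real.log (ν i)) - Real.log 2) := by
    rw [formulaν, hsplit]
  have hterm : ∀ i ∈ Finset.univ, (0:ℝ) ≤
      (Real.log (1 + ν i) - (1 / 2) * Real.log (ν i)) - Real.log 2 :=
    fun i _ => sub_nonneg.mpr (log_two_le_f (hνpos i))
  have hnn : 0 ≤ Sdiv A B := by
    rw [hsum]; exact Finset.sum_nonneg hterm
  refine ⟨hnn, ?_, ?_⟩
  · intro h0
    have hzero : ∑ i, ((Real.log (1 + ν i) - (1 / 2) * Real.log (ν i)) - Real.log 2)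
        = 0 := by rw [← hsum, h0]
    have heach := (Finset.sum_eq_zero_iff_of_nonneg hterm).mp hzero
    have hν1 : ∀ i, ν i = 1 := fun i =>
      eq_one_of_f_eq (hνpos i) (by have := heach i (Finset.mem_univ i); linarith)
    have hDiag : Matrix.diagonal (RCLike.ofReal ∘ ν : Fin d → ℝ) = 1 := by
      have h4 : (RCLike.ofReal ∘ ν : Fin d → ℝ) = fun _ => 1 := by
        funext i; simp [hν1 i]
      rw [h4, Matrix.diagonal_one]
    have hC1 : C = 1 := by
      rw [hsp, hDiag, Matrix.mul_one, hUU]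
    have h5 : S * C * S = B := by
      rw [hCdef, ← Matrix.mul_assoc S, ← Matrix.mul_assoc S, hSSi, Matrix.one_mul,
        Matrix.mul_assoc, hSiS, Matrix.mul_one]
    rw [hC1, Matrix.mul_one, hSS] at h5
    exact h5
  · intro hAB
    subst hAB
    have h2A : (2 : ℝ)⁻¹ • (A + A) = A := by
      rw [← two_smul ℝ A, smul_smul]; norm_num
    rw [Sdiv, h2A, Matrix.det_mul, Real.log_mul hdA.ne' hdA.ne']
    ring
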